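/- arXiv:1504.00721 — 2 statements merged into one kernel-verified Lean document; each statement's English description precedes it below -/
import Mathlib

section
/- The transition matrix of the star K_{1,n} (n ≥ 1) is U(t) = [[cos(√n·t), (i/√n)·sin(√n·t)·𝟙^T], [(i/√n)·sin(√n·t)·𝟙, I + (1/n)(cos(√n·t) − 1)·J]], where the first row/column is indexed by the center and J is the n×n all-ones matrix. -/
/-- Adjacency matrix of the star `K_{1,n}`: vertex `0` is the center,
vertices `1,…,n` are the leaves. -/
noncomputable def starAdj (n : ℕ) : Matrix (Fin (n + 1)) (Fin (n + 1)) ℂ :=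
  fun i j => if (i = 0 ∧ j ≠ 0) ∨ (i ≠ 0 ∧ j = 0) then 1 else 0

open Matrix Nat

lemma starAdj_sq (n : ℕ) :
    starAdj n * starAdj n =
      fun i j => if i = 0 ∧ j = 0 then (n : ℂ) else if i ≠ 0 ∧ j ≠ 0 then 1 else 0 := by
  funext i j
  rw [Matrix.mul_apply]
  simp only [starAdj]
  rcases eq_or_ne i 0 with hi | hi <;> rcases eq_or_ne j 0 with hj | hj <;>
    simp [hi, hj, Fin.sum_univ_succ, Fin.succ_ne_zero]

lemma starAdj_cube (n : ℕ) :
    starAdj n * starAdj n * starAdj n = (n : ℂ) • starAdj n := by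
  rw [starAdj_sq]
  funext i j
  erw [Matrix.mul_apply, Matrix.smul_apply]
  simp only [starAdj]
  rcases eq_or_ne i 0 with hi | hi <;> rcases eq_or_ne j 0 with hj | hj <;>
    simp [hi, hj, Fin.sum_univ_succ, Fin.succ_ne_zero, mul_comm]

lemma starAdj_pow_odd (n k : ℕ) :
    starAdj n ^ (2 * k + 1) = ((n : ℂ) ^ k) • starAdj n := by
  induction k with
  | zero => simp
  | succ k ih =>
    have : 2 * (k + 1) + 1 = (2 * k + 1) + 2 := by ring
    rw [this, pow_add, ih, pow_two, smul_mul_assoc, ← mul_assoc, starAdj_cube,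
      smul_smul, pow_succ]

lemma starAdj_pow_even (n k : ℕ) :
    starAdj n ^ (2 * (k + 1)) = ((n : ℂ) ^ k) • (starAdj n * starAdj n) := by
  have : 2 * (k + 1) = (2 * k + 1) + 1 := by ring
  rw [this, pow_succ, starAdj_pow_odd, smul_mul_assoc]

theorem star_transition_matrix (n : ℕ) (hn : 1 ≤ n) (t : ℝ) (i j : Fin (n + 1)) :
    NormedSpace.exp ((Complex.I * (t : ℂ)) • starAdj n) i j =
      if i = 0 ∧ j = 0 then Complex.cos ((Real.sqrt n * t : ℝ) : ℂ)
      else if i = 0 ∨ j = 0 then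
        (Complex.I / (Real.sqrt n : ℂ)) * Complex.sin ((Real.sqrt n * t : ℝ) : ℂ)
      else (if i = j then 1 else 0)
        + (1 / (n : ℂ)) * (Complex.cos ((Real.sqrt n * t : ℝ) : ℂ) - 1) := by
  letI : SeminormedRing (Matrix (Fin (n + 1)) (Fin (n + 1)) ℂ) :=
    Matrix.linftyOpSemiNormedRing
  letI : NormedRing (Matrix (Fin (n + 1)) (Fin (n + 1)) ℂ) := Matrix.linftyOpNormedRing
  letI : NormedAlgebra ℂ (Matrix (Fin (n + 1)) (Fin (n + 1)) ℂ) :=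
    Matrix.linftyOpNormedAlgebra
  set A := starAdj n with hA
  set c : ℝ := Real.sqrt n with hcdef
  have hn0 : (n : ℝ) ≠ 0 := by positivity
  have hnC : (n : ℂ) ≠ 0 := Nat.cast_ne_zero.mpr (by omega)
  have hcsq : (c : ℂ) ^ 2 = (n : ℂ) := by
    have : c ^ 2 = (n : ℝ) := Real.sq_sqrt (by positivity)
    rw [show ((n : ℂ)) = ((n : ℝ) : ℂ) by push_cast; ring, ← this]
    push_cast; ring
  have hc0 : (c : ℂ) ≠ 0 := by
    intro h
    rw [h] at hcsq
    simp at hcsq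
    exact hnC hcsq.symm
  set s : ℂ := Complex.I * (t : ℂ) with hs
  set ct : ℂ := ((c * t : ℝ) : ℂ) with hct
  have hct' : ct = (c : ℂ) * (t : ℂ) := by push_cast [hct]; ring
  -- the scalar coefficient series
  have hIpow_odd : ∀ k : ℕ, Complex.I ^ (2 * k + 1) = (-1 : ℂ) ^ k * Complex.I := by
    intro k
    rw [pow_succ, pow_mul, Complex.I_sq]
  have hIpow_even : ∀ k : ℕ, Complex.I ^ (2 * (k + 1)) = (-1 : ℂ) ^ (k + 1) := by
    intro k
    rw [pow_mul, Complex.I_sq]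
  have hodd : HasSum (fun k : ℕ => (((2 * k + 1) ! : ℂ))⁻¹ * (s ^ (2 * k + 1) * (n : ℂ) ^ k))
      (Complex.I / (c : ℂ) * Complex.sin ct) := by
    have h1 := (Complex.hasSum_sin ct).mul_left (Complex.I / (c : ℂ))
    convert h1 using 2 with k
    · rfl
    rw [hct', hs]
    rw [mul_pow, hIpow_odd, mul_pow]
    have hcn : ((c : ℂ)) ^ (2 * k + 1) = (c : ℂ) * (n : ℂ) ^ k := by
      rw [pow_succ, pow_mul, hcsq, mul_comm]
    rw [hcn]
    linear_combination (-((-1 : ℂ) ^ k * Complex.I * (t : ℂ) ^ (2 * k + 1) * (n : ℂ) ^ k *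
      (((2 * k + 1) ! : ℂ))⁻¹)) * (inv_mul_cancel₀ hc0)
  have heven : HasSum (fun k : ℕ => (((2 * (k + 1)) ! : ℂ))⁻¹ * (s ^ (2 * (k + 1)) * (n : ℂ) ^ k))
      (((n : ℂ))⁻¹ * (Complex.cos ct - 1)) := by
    have h0 := Complex.hasSum_cos ct
    have h1 : HasSum (fun k : ℕ => (-1 : ℂ) ^ (k + 1) * ct ^ (2 * (k + 1)) / ((2 * (k + 1)) !))
        (Complex.cos ct - 1) :=
      (hasSum_nat_add_iff (f := fun k : ℕ =>
        (-1 : ℂ) ^ k * ct ^ (2 * k) / ((2 * k) !)) 1).mpr (by simpa using h0)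
    have h2 := h1.mul_left ((n : ℂ))⁻¹
    convert h2 using 2 with k
    · rfl
    rw [hct', hs]
    rw [mul_pow, hIpow_even, mul_pow]
    have hcn : ((c : ℂ)) ^ (2 * (k + 1)) = (n : ℂ) * (n : ℂ) ^ k := by
      rw [pow_mul, hcsq, pow_succ, mul_comm]
    rw [hcn]
    linear_combination (-((-1 : ℂ) ^ (k + 1) * (t : ℂ) ^ (2 * (k + 1)) * (n : ℂ) ^ k *
      (((2 * (k + 1)) ! : ℂ))⁻¹)) * (inv_mul_cancel₀ hnC)
  -- lift to matrix sums
  have hoddM : HasSum (fun k : ℕ => ((((2 * k + 1)) ! : ℂ))⁻¹ • (s • A) ^ (2 * k + 1))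
      ((Complex.I / (c : ℂ) * Complex.sin ct) • A) := by
    have := hodd.smul_const A
    convert this using 2 with k
    rw [smul_pow, starAdj_pow_odd, smul_smul, smul_smul]
    ring_nf
    rfl
  have hevenM : HasSum (fun k : ℕ => ((((2 * (k + 1))) ! : ℂ))⁻¹ • (s • A) ^ (2 * (k + 1)))
      ((((n : ℂ))⁻¹ * (Complex.cos ct - 1)) • (A * A)) := by
    have := heven.smul_const (A * A)
    convert this using 2 with k
    rw [smul_pow, starAdj_pow_even, smul_smul, smul_smul]
    ring_nf
    rfl
  have hevenM' : HasSum (fun k : ℕ => (((2 * k) ! : ℂ))⁻¹ • (s • A) ^ (2 * k))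
      ((((n : ℂ))⁻¹ * (Complex.cos ct - 1)) • (A * A) + 1) := by
    have h4 := (hasSum_nat_add_iff
      (f := fun k : ℕ => (((2 * k) ! : ℂ))⁻¹ • (s • A) ^ (2 * k)) 1).mp hevenM
    simpa using h4
  have htotal : HasSum (fun m : ℕ => ((m ! : ℂ))⁻¹ • (s • A) ^ m)
      (((((n : ℂ))⁻¹ * (Complex.cos ct - 1)) • (A * A) + 1) +
        (Complex.I / (c : ℂ) * Complex.sin ct) • A) :=
    HasSum.even_add_odd hevenM' hoddM
  have hexp : NormedSpace.exp (s • A) =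
      ((((n : ℂ))⁻¹ * (Complex.cos ct - 1)) • (A * A) + 1) +
        (Complex.I / (c : ℂ) * Complex.sin ct) • A := by
    rw [NormedSpace.exp_eq_tsum ℂ]
    exact htotal.tsum_eq
  rw [hexp]
  rw [Matrix.add_apply, Matrix.add_apply, Matrix.smul_apply, Matrix.smul_apply,
    Matrix.one_apply, starAdj_sq]
  simp only [hA, starAdj, smul_eq_mul]
  rcases eq_or_ne i 0 with hi | hi <;> rcases eq_or_ne j 0 with hj | hj
  · simp only [hi, hj]
    simp
    field_simp
    ring
  · simp only [hi, hj]
    simp [hj, Ne.symm hj]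
  · simp only [hi, hj]
    simp [hi]
  · simp only [hi, hj]
    simp [hi, hj, one_div]
    ring
end

section
/- For every k ≥ 2, setting d = 2·3^k − 9 and r = 3^k − 1: (a) the binomial coefficient C(d−1, r−1) is divisible by 3^{k−2} but not by 3^{k−1}; (b) for each h with 1 ≤ h ≤ k−2, the binomial coefficient C(d−h−1, r−h−1) is divisible by 3^{k−h−1}. -/
open Finset Nat

lemma key_mod (i k c : ℕ) (hik : i ≤ k) (hc : 1 ≤ c) (hci : c ≤ 3 ^ i) :
    (3 ^ k - c) % 3 ^ i = 3 ^ i - c := by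
  have h3 : (3:ℕ) ^ k = 3 ^ i * 3 ^ (k - i) := by
    rw [← pow_add]; congr 1; omega
  have ht : 1 ≤ 3 ^ (k - i) := Nat.one_le_pow _ _ (by norm_num)
  have : 3 ^ k - c = 3 ^ i * (3 ^ (k - i) - 1) + (3 ^ i - c) := by
    rw [h3, Nat.mul_sub_one]
    have : 3 ^ i ≤ 3 ^ i * 3 ^ (k-i) := Nat.le_mul_of_pos_right _ (by positivity)
    omega
  rw [this, Nat.mul_add_mod, Nat.mod_eq_of_lt (by omega)]


theorem ternary_binomial_divisibility (k d r : ℕ) (hk : 2 ≤ k)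
    (hd : d = 2 * 3 ^ k - 9) (hr : r = 3 ^ k - 1) :
    -- (a) C(d-1, r-1) is divisible by 3^{k-2} but not by 3^{k-1}
    (3 ^ (k - 2) ∣ (d - 1).choose (r - 1) ∧ ¬ (3 ^ (k - 1) ∣ (d - 1).choose (r - 1)))
    -- (b) for 1 ≤ h ≤ k-2, C(d-h-1, r-h-1) is divisible by 3^{k-h-1}
    ∧ (∀ h : ℕ, 1 ≤ h → h ≤ k - 2 →
        3 ^ (k - h - 1) ∣ (d - h - 1).choose (r - h - 1)) := by
  have hp : Nat.Prime 3 := by norm_num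
  have h9 : 9 ≤ 3 ^ k := by
    calc (9:ℕ) = 3 ^ 2 := by norm_num
    _ ≤ 3 ^ k := Nat.pow_le_pow_right (by norm_num) hk
  have h3k1 : 2 * 3 ^ k < 3 ^ (k+1) := by rw [pow_succ]; omega
  constructor
  · -- part (a)
    have hkn : r - 1 ≤ d - 1 := by omega
    have hnb : Nat.log 3 (d - 1) < k + 1 := Nat.log_lt_of_lt_pow (by omega) (by omega)
    have hmul := Nat.Prime.emultiplicity_choose hp hkn hnb
    have hsub : d - 1 - (r - 1) = 3 ^ k - 8 := by omega
    have hr1 : r - 1 = 3 ^ k - 2 := by omega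
    have hset : {i ∈ Ico 1 (k+1) | 3 ^ i ≤ (r-1) % 3 ^ i + (d - 1 - (r-1)) % 3 ^ i}
        = Ico 3 (k+1) := by
      rw [hsub, hr1]
      ext i
      simp only [Finset.mem_filter, Finset.mem_Ico]
      constructor
      · rintro ⟨⟨h1, h2⟩, hpred⟩
        refine ⟨?_, h2⟩
        by_contra hi3
        interval_cases i
        · -- i = 1
          have e1 : (3 ^ k - 2) % 3 ^ 1 = 3 ^ 1 - 2 := key_mod 1 k 2 (by omega) (by norm_num) (by norm_num)
          have e2 : (3 ^ k - 8) % 3 = 1 := by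
            have h3 : (3:ℕ) ^ k = 3 * 3 ^ (k - 1) := by
              rw [← pow_succ']; congr 1; omega
            have ht : 3 ≤ 3 ^ (k - 1) := by
              calc (3:ℕ) = 3 ^ 1 := by norm_num
              _ ≤ 3 ^ (k-1) := Nat.pow_le_pow_right (by norm_num) (by omega)
            have : 3 ^ k - 8 = 3 * (3 ^ (k-1) - 3) + 1 := by omega
            rw [this, Nat.mul_add_mod]
          simp only [pow_one] at hpred e1
          omega
        · -- i = 2
          have e1 : (3 ^ k - 2) % 3 ^ 2 = 3 ^ 2 - 2 := key_mod 2 k 2 (by omega) (by norm_num) (by norm_num)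
          have e2 : (3 ^ k - 8) % 3 ^ 2 = 3 ^ 2 - 8 := key_mod 2 k 8 (by omega) (by norm_num) (by norm_num)
          norm_num at hpred e1 e2
          omega
      · rintro ⟨h3le, h2⟩
        have hik : i ≤ k := by omega
        have h27 : 27 ≤ 3 ^ i := by
          calc (27:ℕ) = 3 ^ 3 := by norm_num
          _ ≤ 3 ^ i := Nat.pow_le_pow_right (by norm_num) h3le
        have e1 : (3 ^ k - 2) % 3 ^ i = 3 ^ i - 2 := key_mod i k 2 hik (by norm_num) (by omega)
        have e2 : (3 ^ k - 8) % 3 ^ i = 3 ^ i - 8 := key_mod i k 8 hik (by norm_num) (by omega)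
        exact ⟨⟨by omega, h2⟩, by omega⟩
    rw [hset] at hmul
    have hcard : (Ico 3 (k+1)).card = k - 2 := by rw [Nat.card_Ico]; omega
    rw [hcard] at hmul
    constructor
    · exact pow_dvd_of_le_emultiplicity (le_of_eq hmul.symm)
    · rw [← emultiplicity_lt_iff_not_dvd, hmul]
      exact_mod_cast Nat.sub_lt_sub_left (by omega) (by omega)
  · -- part (b)
    intro h hh1 hh2
    have hk3 : 3 ≤ k := by omega
    have hkpow : k < 3 ^ k := Nat.lt_pow_self (by norm_num : 1 < 3)
    have hkn : r - h - 1 ≤ d - h - 1 := by omega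
    have hnb : Nat.log 3 (d - h - 1) < k + 1 := Nat.log_lt_of_lt_pow (by omega) (by omega)
    have hmul := Nat.Prime.emultiplicity_choose hp hkn hnb
    have hsub : d - h - 1 - (r - h - 1) = 3 ^ k - 8 := by omega
    have hr1 : r - h - 1 = 3 ^ k - (2 + h) := by omega
    have hsubset : Ico (h+2) (k+1) ⊆
        {i ∈ Ico 1 (k+1) | 3 ^ i ≤ (r-h-1) % 3 ^ i + (d - h - 1 - (r-h-1)) % 3 ^ i} := by
      intro i hi
      rw [Finset.mem_Ico] at hi
      rw [Finset.mem_filter, Finset.mem_Ico, hsub, hr1]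
      have hik : i ≤ k := by omega
      have hhp : h + 1 ≤ 3 ^ h := Nat.lt_pow_self (by norm_num : 1 < 3)
      have h10 : 10 + h ≤ 3 ^ i := by
        calc 10 + h ≤ 9 * (h + 1) := by omega
        _ ≤ 9 * 3 ^ h := by omega
        _ = 3 ^ (h + 2) := by ring
        _ ≤ 3 ^ i := Nat.pow_le_pow_right (by norm_num) hi.1
      have e1 : (3 ^ k - (2+h)) % 3 ^ i = 3 ^ i - (2+h) :=
        key_mod i k (2+h) hik (by omega) (by omega)
      have e2 : (3 ^ k - 8) % 3 ^ i = 3 ^ i - 8 := key_mod i k 8 hik (by norm_num) (by omega)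
      exact ⟨⟨by omega, by omega⟩, by omega⟩
    have hcard : k - h - 1 ≤
        ({i ∈ Ico 1 (k+1) | 3 ^ i ≤ (r-h-1) % 3 ^ i + (d - h - 1 - (r-h-1)) % 3 ^ i}).card := by
      calc k - h - 1 = (Ico (h+2) (k+1)).card := by rw [Nat.card_Ico]; omega
      _ ≤ _ := Finset.card_le_card hsubset
    apply pow_dvd_of_le_emultiplicity
    rw [hmul]
    exact_mod_cast hcard
end
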